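/- Suppose every item fits into the largest bin (max_i s_i ≤ b_max) and each item may be cut at most once. Then Next Fit with Cuts — which fills bins of capacity b_max consecutively, splitting the current item whenever it does not fully fit and placing the remainder into the next bin — uses exactly ⌈(Σ_i s_i)/b_max⌉ bins, which is optimal: no feasible packing uses fewer bins. -/
import Mathlib


open scoped BigOperators

/-- A feasible packing of item sizes `L` into `k` bins with capacities `caps`,
where each item may be split into at most `D + 1` positive fragments. -/
def FeasiblePacking (L : List ℝ) {k : ℕ} (caps : Fin k → ℝ) (D : ℕ) : Prop :=
  ∃ pieces : List (List (ℝ × Fin k)),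
    List.Forall₂ (fun (s : ℝ) (fr : List (ℝ × Fin k)) =>
      fr.length ≤ D + 1 ∧ (fr.map Prod.fst).sum = s ∧ ∀ p ∈ fr, 0 < p.1) L pieces ∧
    ∀ j : Fin k, ((pieces.flatten.filter (fun p => p.2 = j)).map Prod.fst).sum ≤ caps j

open Classical in
/-- Next Fit with cuts, with natural-number bin indices.
State: current bin `j`, amount `r` already in bin `j`. -/
noncomputable def NF (bmax : ℝ) : List ℝ → ℕ → ℝ → List (List (ℝ × ℕ))
  | [], _, _ => []
  | s :: L, j, r =>
    if s < bmax - r then [(s, j)] :: NF bmax L j (r + s)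
    else if s = bmax - r then [(s, j)] :: NF bmax L (j + 1) 0
    else [(bmax - r, j), (s - (bmax - r), j + 1)] :: NF bmax L (j + 1) (s - (bmax - r))

noncomputable def loadN (i : ℕ) (P : List (List (ℝ × ℕ))) : ℝ :=
  ((P.flatten.filter (fun p => p.2 = i)).map Prod.fst).sum

lemma NF_forall2 {bmax : ℝ} (hb : 0 < bmax) :
    ∀ (L : List ℝ) (j : ℕ) (r : ℝ), 0 ≤ r → r < bmax →
    (∀ s ∈ L, 0 < s ∧ s ≤ bmax) →
    List.Forall₂ (fun (s : ℝ) (fr : List (ℝ × ℕ)) =>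
      fr.length ≤ 2 ∧ (fr.map Prod.fst).sum = s ∧ ∀ p ∈ fr, 0 < p.1)
      L (NF bmax L j r) := by
  intro L
  induction L with
  | nil => intro j r _ _ _; simp [NF]
  | cons s L ih =>
    intro j r hr hrb hL
    have hs := hL s (by simp)
    have hL' : ∀ t ∈ L, 0 < t ∧ t ≤ bmax := fun t ht => hL t (by simp [ht])
    rw [NF]
    split_ifs with h1 h2
    · exact List.Forall₂.cons (by simp [hs.1]) (ih j (r + s) (by linarith [hs.1]) (by linarith) hL')
    · exact List.Forall₂.cons (by simp [hs.1]) (ih (j + 1) 0 le_rfl hb hL')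
    · push_neg at h1
      have hlt : bmax - r < s := lt_of_le_of_ne h1 (fun h => h2 h.symm)
      refine List.Forall₂.cons ?_ (ih (j + 1) (s - (bmax - r)) (by linarith) (by linarith [hs.2]) hL')
      refine ⟨by simp, by simp, ?_⟩
      intro p hp
      simp only [List.mem_cons, List.mem_singleton, List.not_mem_nil, or_false] at hp
      rcases hp with h | h <;> subst h <;> simp <;> linarith

lemma NF_mem {bmax : ℝ} (hb : 0 < bmax) :
    ∀ (L : List ℝ) (j : ℕ) (r : ℝ), 0 ≤ r → r < bmax →
    (∀ s ∈ L, 0 < s ∧ s ≤ bmax) →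
    ∀ p ∈ (NF bmax L j r).flatten, j ≤ p.2 ∧ (p.2 : ℝ) * bmax < j * bmax + r + L.sum := by
  intro L
  induction L with
  | nil => intro j r _ _ _; simp [NF]
  | cons s L ih =>
    intro j r hr hrb hL p hp
    have hs := hL s (by simp)
    have hL' : ∀ t ∈ L, 0 < t ∧ t ≤ bmax := fun t ht => hL t (by simp [ht])
    have hsum : 0 ≤ L.sum := List.sum_nonneg (fun t ht => (hL' t ht).1.le)
    rw [NF] at hp
    split_ifs at hp with h1 h2
    · simp only [List.flatten_cons, List.mem_append] at hp
      rcases hp with hp | hp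
      · simp at hp; subst hp; simp; nlinarith [hs.1]
      · have := ih j (r + s) (by linarith [hs.1]) (by linarith) hL' p hp
        constructor
        · exact this.1
        · have := this.2; push_cast at this ⊢; simp only [List.sum_cons]; linarith
    · simp only [List.flatten_cons, List.mem_append] at hp
      rcases hp with hp | hp
      · simp at hp; subst hp; simp; nlinarith [hs.1]
      · have := ih (j + 1) 0 le_rfl hb hL' p hp
        refine ⟨le_trans (by omega) this.1, ?_⟩
        have h2' := this.2
        push_cast at h2' ⊢
        simp only [List.sum_cons]
        have : r + s = bmax := by linarith
        linarith
    · push_neg at h1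
      have hlt : bmax - r < s := lt_of_le_of_ne h1 (fun h => h2 h.symm)
      simp only [List.flatten_cons, List.mem_append] at hp
      rcases hp with hp | hp
      · simp at hp
        rcases hp with h | h <;> subst h
        · simp; nlinarith [hs.1]
        · constructor
          · omega
          · push_cast; simp only [List.sum_cons]; nlinarith
      · have := ih (j + 1) (s - (bmax - r)) (by linarith) (by linarith [hs.2]) hL' p hp
        refine ⟨le_trans (by omega) this.1, ?_⟩
        have h2' := this.2
        push_cast at h2' ⊢
        simp only [List.sum_cons]
        linarith

lemma loadN_cons (i : ℕ) (fr : List (ℝ × ℕ)) (P : List (List (ℝ × ℕ))) :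
    loadN i (fr :: P) = ((fr.filter (fun p => p.2 = i)).map Prod.fst).sum + loadN i P := by
  simp [loadN, List.filter_append]

lemma loadN_eq_zero {i : ℕ} {P : List (List (ℝ × ℕ))}
    (h : ∀ p ∈ P.flatten, p.2 ≠ i) : loadN i P = 0 := by
  unfold loadN
  rw [List.filter_eq_nil_iff.mpr (by intro p hp; simpa using h p hp)]
  simp

lemma loadN_single (s : ℝ) (j i : ℕ) (P : List (List (ℝ × ℕ))) :
    loadN i ([(s, j)] :: P) = (if j = i then s else 0) + loadN i P := by
  simp only [loadN, List.flatten_cons, List.filter_append, List.map_append, List.sum_append]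
  congr 1
  simp only [List.filter_cons, List.filter_nil, decide_eq_true_eq]
  split_ifs <;> simp

lemma loadN_pair (a b : ℝ) (j j' i : ℕ) (P : List (List (ℝ × ℕ))) :
    loadN i ([(a, j), (b, j')] :: P)
      = (if j = i then a else 0) + (if j' = i then b else 0) + loadN i P := by
  simp only [loadN, List.flatten_cons, List.filter_append, List.map_append, List.sum_append]
  congr 1
  simp only [List.filter_cons, List.filter_nil, decide_eq_true_eq]
  split_ifs <;> simp

lemma NF_load_le {bmax : ℝ} (hb : 0 < bmax) :
    ∀ (L : List ℝ) (j : ℕ) (r : ℝ), 0 ≤ r → r < bmax →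
    (∀ s ∈ L, 0 < s ∧ s ≤ bmax) →
    ∀ i, loadN i (NF bmax L j r) + (if i = j then r else 0) ≤ bmax := by
  intro L
  induction L with
  | nil =>
    intro j r hr hrb _ i
    rw [NF]
    have h0 : loadN i ([] : List (List (ℝ × ℕ))) = 0 := by simp [loadN]
    rw [h0]
    split_ifs <;> linarith
  | cons s L ih =>
    intro j r hr hrb hL i
    have hs := hL s (by simp)
    have hL' : ∀ t ∈ L, 0 < t ∧ t ≤ bmax := fun t ht => hL t (by simp [ht])
    rw [NF]
    by_cases h1 : s < bmax - r
    case pos =>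
      rw [if_pos h1, loadN_single]
      have := ih j (r + s) (by linarith [hs.1]) (by linarith) hL' i
      by_cases hij : i = j
      · rw [if_pos hij.symm, if_pos hij]
        rw [if_pos hij] at this
        linarith
      · have hji : ¬ (j = i) := fun h => hij h.symm
        rw [if_neg hji, if_neg hij]
        rw [if_neg hij] at this
        linarith
    case neg =>
     rw [if_neg h1]
     by_cases h2 : s = bmax - r
     case pos =>
      rw [if_pos h2, loadN_single]
      by_cases hij : i = j
      · have hz : loadN i (NF bmax L (j + 1) 0) = 0 := by
          apply loadN_eq_zero
          intro p hp
          have := (NF_mem hb L (j + 1) 0 le_rfl hb hL' p hp).1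
          omega
        rw [hz, if_pos hij.symm, if_pos hij]
        linarith
      · have := ih (j + 1) 0 le_rfl hb hL' i
        have hji : ¬ (j = i) := fun h => hij h.symm
        rw [if_neg hji, if_neg hij]
        split_ifs at this with h
        · rw [add_zero] at this; linarith
        · rw [add_zero] at this; linarith
     case neg =>
      push_neg at h1
      have hlt : bmax - r < s := lt_of_le_of_ne h1 (fun h => h2 h.symm)
      rw [if_neg h2, loadN_pair]
      by_cases hij : i = j
      · have hz : loadN i (NF bmax L (j + 1) (s - (bmax - r))) = 0 := by
          apply loadN_eq_zero
          intro p hp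
          have := (NF_mem hb L (j + 1) (s - (bmax - r)) (by linarith)
            (by linarith [hs.2]) hL' p hp).1
          omega
        have hne : ¬ (j + 1 = i) := by omega
        rw [hz, if_pos hij.symm, if_neg hne, if_pos hij]
        linarith
      · have := ih (j + 1) (s - (bmax - r)) (by linarith) (by linarith [hs.2]) hL' i
        have hji : ¬ (j = i) := fun h => hij h.symm
        rw [if_neg hji, if_neg hij, add_zero]
        by_cases h : i = j + 1
        · rw [if_pos h.symm]
          rw [if_pos h] at this
          linarith
        · have h' : ¬ (j + 1 = i) := fun hh => h hh.symm
          rw [if_neg h']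
          rw [if_neg h, add_zero] at this
          linarith

/-- Partition a sum over fragments by their bin index. -/
lemma sum_partition {k : ℕ} (l : List (ℝ × Fin k)) :
    (l.map Prod.fst).sum = ∑ j : Fin k, ((l.filter (fun p => p.2 = j)).map Prod.fst).sum := by
  induction l with
  | nil => simp
  | cons p l ih =>
    simp only [List.map_cons, List.sum_cons, List.filter_cons, decide_eq_true_eq]
    have key : ∀ x : Fin k,
        (List.map Prod.fst (if p.2 = x then p :: List.filter (fun q => decide (q.2 = x)) l
          else List.filter (fun q => decide (q.2 = x)) l)).sum
        = (if p.2 = x then p.1 else 0)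
            + (List.map Prod.fst (List.filter (fun q => decide (q.2 = x)) l)).sum := by
      intro x
      split_ifs <;> simp
    rw [Finset.sum_congr rfl (fun x _ => key x), Finset.sum_add_distrib, Finset.sum_ite_eq]
    simp [ih]

lemma forall2_sum {D : ℕ} {k : ℕ} {L : List ℝ} {pieces : List (List (ℝ × Fin k))}
    (h : List.Forall₂ (fun (s : ℝ) (fr : List (ℝ × Fin k)) =>
      fr.length ≤ D + 1 ∧ (fr.map Prod.fst).sum = s ∧ ∀ p ∈ fr, 0 < p.1) L pieces) :
    L.sum = (pieces.flatten.map Prod.fst).sum := by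
  induction h with
  | nil => simp
  | cons h _ ih => simp [List.sum_cons, ih, h.2.1]

/-- Next Fit with Cuts: if every item fits in the largest bin and each item may be cut
at most once, there is a packing into exactly `⌈S / bmax⌉` bins of capacity `bmax`,
and no feasible packing (with at most one cut per item) uses fewer bins. -/
theorem stmt1 (L : List ℝ) (bmax : ℝ) (hb : 0 < bmax)
    (hL : ∀ s ∈ L, 0 < s ∧ s ≤ bmax) :
    FeasiblePacking L (fun _ : Fin (⌈L.sum / bmax⌉.toNat) => bmax) 1 ∧
    ∀ k : ℕ, FeasiblePacking L (fun _ : Fin k => bmax) 1 → ⌈L.sum / bmax⌉.toNat ≤ k := by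
  constructor
  · -- existence
    rcases eq_or_ne L [] with rfl | hne
    · exact ⟨[], by simp, by intro j; simp [hb.le]⟩
    · set k := (⌈L.sum / bmax⌉).toNat with hk
      have hS : 0 < L.sum := by
        rcases List.exists_mem_of_ne_nil L hne with ⟨x, hx⟩
        have := List.single_le_sum (fun t ht => (hL t ht).1.le) x hx
        linarith [(hL x hx).1]
      have hkpos : 0 < k := by
        rw [hk]
        have hpos : (0 : ℝ) < L.sum / bmax := div_pos hS hb
        have h1 : (1 : ℤ) ≤ ⌈L.sum / bmax⌉ := by exact_mod_cast Int.ceil_pos.mpr hpos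
        omega
      set P := NF bmax L 0 0 with hP
      have hmem : ∀ p ∈ P.flatten, p.2 < k := by
        intro p hp
        have h2 := (NF_mem hb L 0 0 le_rfl hb hL p hp).2
        simp only [Nat.cast_zero, zero_mul, zero_add] at h2
        have hlt : (p.2 : ℝ) < L.sum / bmax := by
          rw [lt_div_iff₀ hb]; linarith
        have h3 : ((p.2 : ℤ) : ℝ) < ((⌈L.sum / bmax⌉ : ℤ) : ℝ) := by
          push_cast
          exact lt_of_lt_of_le hlt (Int.le_ceil _)
        have h4 : (p.2 : ℤ) < ⌈L.sum / bmax⌉ := by exact_mod_cast h3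
        omega
      set g : ℝ × ℕ → ℝ × Fin k :=
        fun q => (q.1, (⟨q.2 % k, Nat.mod_lt _ hkpos⟩ : Fin k)) with hg
      refine ⟨P.map (List.map g), ?_, ?_⟩
      · rw [List.forall₂_map_right_iff]
        refine (NF_forall2 hb L 0 0 le_rfl hb hL).imp ?_
        intro a b hab
        refine ⟨by simpa using hab.1, ?_, ?_⟩
        · rw [List.map_map]
          exact hab.2.1
        · intro p hp
          simp only [List.mem_map] at hp
          obtain ⟨q, hq, rfl⟩ := hp
          exact hab.2.2 q hq
      · intro j
        simp only
        rw [← List.map_flatten, List.filter_map, List.map_map]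
        have hpred : ∀ q ∈ P.flatten,
            ((fun p : ℝ × Fin k => decide (p.2 = j)) ∘ g) q = decide (q.2 = (j : ℕ)) := by
          intro q hq
          have hqk := hmem q hq
          simp [hg, Function.comp, Fin.ext_iff, Nat.mod_eq_of_lt hqk]
        rw [List.filter_congr hpred]
        have hload := NF_load_le hb L 0 0 le_rfl hb hL (j : ℕ)
        have : loadN (j : ℕ) P ≤ bmax := by
          split_ifs at hload <;> linarith
        calc ((List.filter (fun q => decide (q.2 = (j : ℕ))) P.flatten).map (Prod.fst ∘ g)).sum
            = ((List.filter (fun q => decide (q.2 = (j : ℕ))) P.flatten).map Prod.fst).sum := by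
              congr 1
          _ ≤ bmax := this
  · -- optimality
    intro k ⟨pieces, hfa, hcaps⟩
    have hsum : L.sum = (pieces.flatten.map Prod.fst).sum := forall2_sum hfa
    have hle : L.sum ≤ k * bmax := by
      rw [hsum, sum_partition]
      calc ∑ j : Fin k, ((pieces.flatten.filter (fun p => p.2 = j)).map Prod.fst).sum
          ≤ ∑ _j : Fin k, bmax := Finset.sum_le_sum (fun j _ => hcaps j)
        _ = k * bmax := by simp [mul_comm]
    have : ⌈L.sum / bmax⌉ ≤ (k : ℤ) := by
      apply Int.ceil_le.mpr
      rw [div_le_iff₀ hb]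
      exact_mod_cast hle
    exact_mod_cast Int.toNat_le.mpr this
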